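/- Let E be a complex Hilbert space, a a subspace of E, and b a closed subspace of E. If the Sasaki projection of a onto bᗮ is trivial, i.e. bᗮ ⊓ (a ⊔ b) = ⊥, then a ≤ b. (In a perfect measurement with eigenproperties b and bᗮ, if one alternative outcome is the impossible property 0, the outcome is determined.) -/

import Mathlib

/-- In a complex Hilbert space, for a subspace `a` and a closed subspace `b`,
if the Sasaki projection of `a` onto `bᗮ` is trivial, `bᗮ ⊓ (a ⊔ b) = ⊥`,
then `a ≤ b`: if one alternative outcome of a perfect measurement is the
impossible property `0`, the outcome is determined. -/
theorem sasaki_eq_bot_imp_le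
    {E : Type*} [NormedAddCommGroup E] [InnerProductSpace ℂ E] [CompleteSpace E]
    (a b : Submodule ℂ E) (hb : IsClosed (b : Set E))
    (h : bᗮ ⊓ (a ⊔ b) = ⊥) : a ≤ b := by
  haveI : CompleteSpace b := hb.completeSpace_coe
  intro x hx
  have hsup : b ⊔ bᗮ = ⊤ := Submodule.sup_orthogonal_of_hasOrthogonalProjection
  have hxmem : x ∈ b ⊔ bᗮ := by rw [hsup]; trivial
  obtain ⟨p, hp, q, hq, rfl⟩ := Submodule.mem_sup.mp hxmem
  have hq' : q ∈ bᗮ ⊓ (a ⊔ b) := by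
    refine ⟨hq, ?_⟩
    have : (p + q) - p ∈ a ⊔ b := Submodule.sub_mem _
      (Submodule.mem_sup_left hx) (Submodule.mem_sup_right hp)
    simpa using this
  rw [h] at hq'
  simp only [Submodule.mem_bot] at hq'
  simpa [hq'] using hp
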